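/- arXiv:1306.6452 — 2 statements merged into one kernel-verified Lean document; each statement's English description precedes it below -/
import Mathlib

section
/- Let Z_0, Z_1, ..., Z_N be elements of an associative algebra with [Z_k, Z_0] = -∑_{0 ≤ l < k-1} c_{0kl} Z_l. Then for any product Z_{k,n} = Z_{k_1}···Z_{k_n}, the commutator [Z_{k,n}, Z_0²] can be written as ∑_{k'} η_{k,k'} Z_0 Z_{k',n} + ∑_{k'} ζ_{k,k'} Z_{k',n} for some real coefficients η, ζ, where the sums range over multi-indices k' with |k'|_n < |k|_n - 1, and |k|_n := k_1 + ... + k_n. -/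
open Finset Submodule in
theorem aux_sum_extend {M : Type*} [AddCommMonoid M] [Module ℝ M] {ι : Type*} [Fintype ι]
    (p : ι → Prop) [DecidablePred p] (f : {i // p i} → ℝ) (w : ι → M) :
    ∑ i : ι, (if h : p i then f ⟨i, h⟩ else 0) • w i = ∑ s : {i // p i}, f s • w s.1 := by
  rw [← Finset.sum_filter_of_ne (p := p)
      (f := fun i => (if h : p i then f ⟨i, h⟩ else 0) • w i)
      (by intro x _ hx; by_contra hpx; exact hx (by simp only [dif_neg hpx, zero_smul])),
    Finset.sum_subtype (p := p) (Finset.univ.filter p) (by simp)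
      (fun i => (if h : p i then f ⟨i, h⟩ else 0) • w i)]
  exact Finset.sum_congr rfl fun s _ => by rw [dif_pos s.2]

open Finset Submodule in
/-- Key lemma: `[Z_{k,n}, Z_0]` lies in the span of products with total degree
dropped by at least 2. -/
theorem aux_key_comm {A : Type*} [Ring A] [Algebra ℝ A]
    (N : ℕ) (Z : ℕ → A) (c : ℕ → ℕ → ℝ)
    (hc : ∀ k, Z k * Z 0 - Z 0 * Z k = -∑ l ∈ range (k - 1), c k l • Z l) :
    ∀ (n : ℕ) (k : Fin n → ℕ), (∀ j, k j ≤ N) →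
      (List.ofFn fun j => Z (k j)).prod * Z 0 - Z 0 * (List.ofFn fun j => Z (k j)).prod ∈
        Submodule.span ℝ {x : A | ∃ k' : Fin n → Fin (N + 1),
          (∑ j, (k' j : ℕ)) + 2 ≤ ∑ j, k j ∧ x = (List.ofFn fun j => Z ((k' j : ℕ))).prod} := by
  intro n
  induction n with
  | zero => intro k hk; simp
  | succ n ih =>
    intro k hk
    have hsplit : (List.ofFn fun j : Fin (n+1) => Z (k j)).prod
        = (List.ofFn fun j : Fin n => Z (k j.castSucc)).prod * Z (k (Fin.last n)) := by
      rw [List.ofFn_succ', List.prod_concat]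
    set Q := (List.ofFn fun j : Fin n => Z (k j.castSucc)).prod with hQ
    set kl := k (Fin.last n) with hkl
    rw [hsplit]
    have hdecomp : (Q * Z kl) * Z 0 - Z 0 * (Q * Z kl)
        = Q * (Z kl * Z 0 - Z 0 * Z kl) + (Q * Z 0 - Z 0 * Q) * Z kl := by noncomm_ring
    rw [hdecomp]
    apply add_mem
    · -- first part
      rw [hc kl, mul_neg, Finset.mul_sum]
      apply neg_mem
      apply sum_mem
      intro l hl
      rw [Finset.mem_range] at hl
      rw [mul_smul_comm]
      apply Submodule.smul_mem
      apply Submodule.subset_span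
      refine ⟨Fin.snoc (fun j : Fin n => (⟨k j.castSucc, Nat.lt_succ_of_le (hk _)⟩ : Fin (N+1)))
          (⟨l, by have := hk (Fin.last n); omega⟩ : Fin (N+1)), ?_, ?_⟩
      · rw [Fin.sum_univ_castSucc, Fin.sum_univ_castSucc (f := fun j => k j)]
        simp only [Fin.snoc_castSucc, Fin.snoc_last]
        have : l + 2 ≤ kl := by omega
        omega
      · rw [List.ofFn_succ', List.prod_concat]
        simp [Fin.snoc_castSucc, Fin.snoc_last, hQ]
    · -- second part
      have ihQ := ih (fun j => k j.castSucc) (fun j => hk _)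
      have hmap := Submodule.mem_map_of_mem (f := LinearMap.mulRight ℝ (Z kl)) ihQ
      rw [Submodule.map_span] at hmap
      simp only [LinearMap.mulRight_apply] at hmap
      refine Submodule.span_mono ?_ hmap
      rintro x ⟨y, ⟨k'', hsum, rfl⟩, rfl⟩
      refine ⟨Fin.snoc k'' (⟨kl, Nat.lt_succ_of_le (hk _)⟩ : Fin (N+1)), ?_, ?_⟩
      · rw [Fin.sum_univ_castSucc, Fin.sum_univ_castSucc (f := fun j => k j)]
        simp only [Fin.snoc_castSucc, Fin.snoc_last]
        omega
      · rw [List.ofFn_succ', List.prod_concat]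
        simp [Fin.snoc_castSucc, Fin.snoc_last]

open Finset Submodule in
theorem aux_comm_span {A : Type*} [Ring A] [Algebra ℝ A] (z : A) (S : Set A)
    (T : Submodule ℝ A) (h : ∀ x ∈ S, x * z - z * x ∈ T) :
    ∀ x ∈ Submodule.span ℝ S, x * z - z * x ∈ T := by
  intro x hx
  have hle : Submodule.span ℝ S ≤ T.comap (LinearMap.mulRight ℝ z - LinearMap.mulLeft ℝ z) := by
    rw [Submodule.span_le]
    intro s hs
    simpa using h s hs
  simpa using hle hx

open Finset in
/-- If `[Z_k, Z_0] = -∑_{0 ≤ l < k-1} c_{0kl} Z_l`, then for any product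
`Z_{k,n} = Z_{k_1} ⋯ Z_{k_n}` (indices in `{0,…,N}`), the commutator `[Z_{k,n}, Z_0²]`
equals `∑_{k'} η_{k,k'} Z_0 Z_{k',n} + ∑_{k'} ζ_{k,k'} Z_{k',n}`, with coefficients
supported on multi-indices `k'` with `|k'|ₙ < |k|ₙ - 1`. -/
theorem commutator_prod_with_Z0_sq {A : Type*} [Ring A] [Algebra ℝ A]
    (N n : ℕ) (Z : ℕ → A) (c : ℕ → ℕ → ℝ)
    (hc : ∀ k, Z k * Z 0 - Z 0 * Z k = -∑ l ∈ range (k - 1), c k l • Z l)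
    (k : Fin n → ℕ) (hk : ∀ j, k j ≤ N) :
    ∃ η ζ : (Fin n → ℕ) → ℝ,
      (∀ k' : Fin n → ℕ, (η k' ≠ 0 ∨ ζ k' ≠ 0) → (∑ j, k' j) + 1 < ∑ j, k j) ∧
      (List.ofFn fun j => Z (k j)).prod * (Z 0 * Z 0)
          - (Z 0 * Z 0) * (List.ofFn fun j => Z (k j)).prod
        = (∑ k' : Fin n → Fin (N + 1),
            η (fun j => (k' j : ℕ)) • (Z 0 * (List.ofFn fun j => Z (k' j : ℕ)).prod))
          + ∑ k' : Fin n → Fin (N + 1),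
            ζ (fun j => (k' j : ℕ)) • (List.ofFn fun j => Z (k' j : ℕ)).prod := by
  have hCmem : (List.ofFn fun j => Z (k j)).prod * Z 0 - Z 0 * (List.ofFn fun j => Z (k j)).prod ∈
      Submodule.span ℝ {x : A | ∃ k' : Fin n → Fin (N + 1),
        (∑ j, (k' j : ℕ)) + 2 ≤ ∑ j, k j ∧ x = (List.ofFn fun j => Z ((k' j : ℕ))).prod} :=
    aux_key_comm N Z c hc n k hk
  set m := ∑ j, k j with hm
  set P : A := (List.ofFn fun j => Z (k j)).prod with hP
  set v : (Fin n → Fin (N + 1)) → A := fun k' => (List.ofFn fun j => Z ((k' j : ℕ))).prod with hv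
  set C : A := P * Z 0 - Z 0 * P with hC
  set p : (Fin n → Fin (N + 1)) → Prop := fun k' => (∑ j, (k' j : ℕ)) + 2 ≤ m with hp
  have hSeq : {x : A | ∃ k' : Fin n → Fin (N + 1), p k' ∧ x = v k'}
      = Set.range (fun s : {k' : Fin n → Fin (N+1) // p k'} => v s.1) := by
    ext x
    constructor
    · rintro ⟨k', h1, h2⟩; exact ⟨⟨k', h1⟩, h2.symm⟩
    · rintro ⟨⟨k', h1⟩, h2⟩; exact ⟨k', h1, h2.symm⟩
  have hDmem : C * Z 0 - Z 0 * C ∈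
      Submodule.span ℝ {x : A | ∃ k' : Fin n → Fin (N + 1), p k' ∧ x = v k'} := by
    refine aux_comm_span (Z 0) _ _ ?_ C hCmem
    rintro x ⟨k'', hsum, rfl⟩
    have h1 := aux_key_comm N Z c hc n (fun j => (k'' j : ℕ))
      (fun j => Nat.lt_succ_iff.mp (k'' j).isLt)
    refine Submodule.span_mono ?_ h1
    rintro y ⟨k3, hsum3, rfl⟩
    have hsum3' : (∑ j, (k3 j : ℕ)) + 2 ≤ ∑ j, (k'' j : ℕ) := hsum3
    exact ⟨k3, by simp only [hp] at hsum ⊢; omega, rfl⟩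
  rw [hSeq] at hCmem hDmem
  rw [Submodule.mem_span_range_iff_exists_fun ℝ] at hCmem hDmem
  obtain ⟨a, ha⟩ := hCmem
  obtain ⟨b, hb⟩ := hDmem
  refine ⟨fun k'' => if h : ∀ j, k'' j < N + 1 then
        2 * (if h2 : p (fun j => ⟨k'' j, h j⟩) then a ⟨fun j => ⟨k'' j, h j⟩, h2⟩ else 0) else 0,
      fun k'' => if h : ∀ j, k'' j < N + 1 then
        (if h2 : p (fun j => ⟨k'' j, h j⟩) then b ⟨fun j => ⟨k'' j, h j⟩, h2⟩ else 0) else 0,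
      ?_, ?_⟩
  · intro k'' hne
    have key : ∃ h : ∀ j, k'' j < N + 1, p (fun j => ⟨k'' j, h j⟩) := by
      by_cases h : ∀ j, k'' j < N + 1
      · refine ⟨h, ?_⟩
        by_contra h2
        rcases hne with hne | hne
        · exact hne (by simp only [dif_pos h, dif_neg h2, mul_zero])
        · exact hne (by simp only [dif_pos h, dif_neg h2])
      · rcases hne with hne | hne <;> exact absurd (dif_neg h) hne
    obtain ⟨h, h2⟩ := key
    have : (∑ j, ((⟨k'' j, h j⟩ : Fin (N+1)) : ℕ)) + 2 ≤ m := h2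
    simp only [Fin.val_mk] at this
    omega
  · have coe_eq : ∀ k' : Fin n → Fin (N + 1),
        (fun j => (⟨(k' j : ℕ), (k' j).isLt⟩ : Fin (N+1))) = k' :=
      fun k' => funext fun j => Fin.eta _ _
    have hηs : ∀ k' : Fin n → Fin (N + 1),
        ((fun (k'' : Fin n → ℕ) => if h : ∀ j, k'' j < N + 1 then
            2 * (if h2 : p (fun j => ⟨k'' j, h j⟩) then a ⟨fun j => ⟨k'' j, h j⟩, h2⟩ else 0)
          else 0) (fun j => (k' j : ℕ)))
        = 2 * (if h2 : p k' then a ⟨k', h2⟩ else 0) := by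
      intro k'
      beta_reduce
      rw [dif_pos (fun j => (k' j).isLt)]
    have hζs : ∀ k' : Fin n → Fin (N + 1),
        ((fun (k'' : Fin n → ℕ) => if h : ∀ j, k'' j < N + 1 then
            (if h2 : p (fun j => ⟨k'' j, h j⟩) then b ⟨fun j => ⟨k'' j, h j⟩, h2⟩ else 0)
          else 0) (fun j => (k' j : ℕ)))
        = (if h2 : p k' then b ⟨k', h2⟩ else 0) := by
      intro k'
      beta_reduce
      rw [dif_pos (fun j => (k' j).isLt)]
    calc P * (Z 0 * Z 0) - (Z 0 * Z 0) * P
        = (2:ℝ) • (Z 0 * C) + (C * Z 0 - Z 0 * C) := by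
          rw [hC, two_smul]; noncomm_ring
      _ = (∑ k' : Fin n → Fin (N + 1),
            (2 * (if h2 : p k' then a ⟨k', h2⟩ else 0)) • (Z 0 * v k'))
          + ∑ k' : Fin n → Fin (N + 1), (if h2 : p k' then b ⟨k', h2⟩ else 0) • v k' := by
          congr 1
          · have e1 : ∀ k' : Fin n → Fin (N + 1),
                (2 * (if h2 : p k' then a ⟨k', h2⟩ else 0)) • (Z 0 * v k')
                = (2:ℝ) • ((if h2 : p k' then a ⟨k', h2⟩ else 0) • (Z 0 * v k')) := by
              intro k'; rw [mul_smul]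
            rw [Finset.sum_congr rfl (fun k' _ => e1 k'), ← Finset.smul_sum,
              aux_sum_extend p a (fun k' => Z 0 * v k')]
            congr 1
            rw [← ha, Finset.mul_sum]
            exact Finset.sum_congr rfl fun s _ => mul_smul_comm _ _ _
          · rw [aux_sum_extend p b v, hb]
      _ = _ := by
          congr 1
          · exact (Finset.sum_congr rfl fun k' _ => by rw [hηs k']).symm
          · exact (Finset.sum_congr rfl fun k' _ => by rw [hζs k']).symm
end

section
/- Suppose F: [0,∞) → [0,∞) is continuous and satisfies F_t ≤ A + e^{-C₂ t} F_0 + C₄ ∫_0^t e^{-C₂(t-s)} F_s ds for all t ≥ 0, where A ≥ 0, C₂ > 0, and 0 < C₄ < C₂. Then sup_{t ≥ 0} F_t ≤ (1 - C₄/C₂)^{-1} (A + F_0). -/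
/-- Gronwall-type uniform bound: if a continuous nonnegative `F` satisfies
`F t ≤ A + e^{-C₂ t} F 0 + C₄ ∫₀ᵗ e^{-C₂ (t-s)} F s ds` with `0 < C₄ < C₂`, then
`sup_{t ≥ 0} F t ≤ (1 - C₄/C₂)⁻¹ (A + F 0)`. -/
theorem gronwall_uniform_bound (F : ℝ → ℝ) (A C2 C4 : ℝ)
    (hFcont : ContinuousOn F (Set.Ici 0))
    (hFnn : ∀ t, 0 ≤ t → 0 ≤ F t)
    (hA : 0 ≤ A) (hC2 : 0 < C2) (hC4 : 0 < C4) (hC42 : C4 < C2)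
    (hineq : ∀ t, 0 ≤ t →
      F t ≤ A + Real.exp (-C2 * t) * F 0
            + C4 * ∫ s in (0 : ℝ)..t, Real.exp (-C2 * (t - s)) * F s) :
    ∀ t, 0 ≤ t → F t ≤ (1 - C4 / C2)⁻¹ * (A + F 0) := by
  intro t ht
  have hne : (Set.Icc (0:ℝ) t).Nonempty := ⟨0, by simp [ht]⟩
  obtain ⟨u, hu, hmax⟩ := isCompact_Icc.exists_isMaxOn hne
    (hFcont.mono Set.Icc_subset_Ici_self)
  have hu0 : 0 ≤ u := hu.1
  set M := F u with hM
  have hMnn : 0 ≤ M := hFnn u hu0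
  -- integrability
  have hint : IntervalIntegrable (fun s => Real.exp (-C2 * (u - s)) * F s)
      MeasureTheory.volume 0 u := by
    apply ContinuousOn.intervalIntegrable
    rw [Set.uIcc_of_le hu0]
    exact ((Real.continuous_exp.comp (by continuity)).continuousOn).mul
      (hFcont.mono Set.Icc_subset_Ici_self)
  have hint2 : IntervalIntegrable (fun s => Real.exp (-C2 * (u - s)) * M)
      MeasureTheory.volume 0 u := by
    apply Continuous.intervalIntegrable; continuity
  have hmono : (∫ s in (0:ℝ)..u, Real.exp (-C2 * (u - s)) * F s)
      ≤ ∫ s in (0:ℝ)..u, Real.exp (-C2 * (u - s)) * M := by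
    apply intervalIntegral.integral_mono_on hu0 hint hint2
    intro s hs
    exact mul_le_mul_of_nonneg_left (hmax ⟨hs.1, hs.2.trans hu.2⟩) (Real.exp_pos _).le
  -- value of the explicit integral
  have hval : (∫ s in (0:ℝ)..u, Real.exp (-C2 * (u - s)) * M)
      = (1 - Real.exp (-C2 * u)) / C2 * M := by
    have hderiv : ∀ s ∈ Set.uIcc (0:ℝ) u,
        HasDerivAt (fun s => Real.exp (-C2 * (u - s)) / C2 * M)
          (Real.exp (-C2 * (u - s)) * M) s := by
      intro s _
      have h1 : HasDerivAt (fun s : ℝ => -C2 * (u - s)) C2 s := by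
        simpa using ((hasDerivAt_id s).const_sub u).const_mul (-C2)
      have h2 := ((h1.exp).div_const C2).mul_const M
      rw [mul_div_cancel_right₀ _ hC2.ne'] at h2
      exact h2
    rw [intervalIntegral.integral_eq_sub_of_hasDerivAt hderiv hint2]
    simp
    ring
  have hkey : M ≤ A + F 0 + C4 / C2 * M := by
    have h1 := hineq u hu0
    have h2 : Real.exp (-C2 * u) * F 0 ≤ F 0 := by
      nlinarith [Real.exp_le_one_iff.mpr (by nlinarith : -C2 * u ≤ 0), hFnn 0 le_rfl]
    have h3 : C4 * ∫ s in (0:ℝ)..u, Real.exp (-C2 * (u - s)) * F s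
        ≤ C4 / C2 * M := by
      calc C4 * ∫ s in (0:ℝ)..u, Real.exp (-C2 * (u - s)) * F s
          ≤ C4 * ((1 - Real.exp (-C2 * u)) / C2 * M) := by
            rw [← hval]; exact mul_le_mul_of_nonneg_left hmono hC4.le
        _ ≤ C4 * (1 / C2 * M) := by
            have hexp : 0 < Real.exp (-C2 * u) := Real.exp_pos _
            apply mul_le_mul_of_nonneg_left _ hC4.le
            apply mul_le_mul_of_nonneg_right _ hMnn
            gcongr
            linarith
        _ = C4 / C2 * M := by ring
    linarith
  have hκ : 0 < 1 - C4 / C2 := by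
    have : C4 / C2 < 1 := (div_lt_one hC2).mpr hC42
    linarith
  have hMle : M ≤ (1 - C4 / C2)⁻¹ * (A + F 0) := by
    rw [inv_mul_eq_div, le_div_iff₀ hκ]
    nlinarith
  exact (hmax ⟨ht, le_rfl⟩).trans hMle
end
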